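/- arXiv:2012.05124 — 5 statements merged into one kernel-verified Lean document; each statement's English description precedes it below -/
import Mathlib

section
/- Let c : ℕ × ℕ → ℝ be a family of real numbers (structure constants, indexed so that c (k,i) is the coefficient c_{ki}). Suppose that for every square-summable real sequence v = (v_i)_{i∈ℕ} the double family (v_i · c_{ki})_{(k,i)∈ℕ×ℕ} is square-summable, i.e. ∑_{k=1}^∞ ∑_{i=1}^∞ |v_i c_{ki}|² < ∞. Then for every pair of square-summable sequences v, w the family (v_i w_i c_{ki})_{i∈ℕ} is summable for each k, the sequence k ↦ ∑_{i=1}^∞ v_i w_i c_{ki} is square-summable, and ∑_{k=1}^∞ |∑_{i=1}^∞ v_i w_i c_{ki}|² ≤ M_v² · ‖w‖², where M_v := (∑_{k=1}^∞ ∑_{i=1}^∞ |v_i c_{ki}|²)^{1/2} and ‖w‖² = ∑_{i=1}^∞ |w_i|². -/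
/-- If for every square-summable `v` the double family `(v i * c (k,i))`
is square-summable, then for square-summable `v, w` the product sequence
`k ↦ ∑' i, v i * w i * c (k,i)` is well defined, square-summable, and its ℓ²-norm
squared is bounded by `M_v² ‖w‖²` where `M_v² = ∑∑ |v_i c_{ki}|²`. -/
theorem hilbert_evolution_product_bound (c : ℕ × ℕ → ℝ)
    (h : ∀ v : ℕ → ℝ, Summable (fun i => |v i| ^ 2) →
      Summable (fun ki : ℕ × ℕ => |v ki.2 * c ki| ^ 2)) :
    ∀ v w : ℕ → ℝ, Summable (fun i => |v i| ^ 2) → Summable (fun i => |w i| ^ 2) →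
      (∀ k, Summable (fun i => v i * w i * c (k, i))) ∧
      Summable (fun k => |∑' i, v i * w i * c (k, i)| ^ 2) ∧
      ∑' k, |∑' i, v i * w i * c (k, i)| ^ 2 ≤
        (∑' ki : ℕ × ℕ, |v ki.2 * c ki| ^ 2) * ∑' i, |w i| ^ 2 := by
  intro v w hv hw
  have hs := h v hv
  set A : ℕ → ℝ := fun k => ∑' i, |v i * c (k, i)| ^ 2 with hA
  set B : ℝ := ∑' i, |w i| ^ 2 with hB
  have hAk : ∀ k, Summable (fun i => |v i * c (k, i)| ^ 2) := fun k => hs.prod_factor k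
  have hAnn : ∀ k, 0 ≤ A k := fun k => tsum_nonneg fun i => sq_nonneg _
  have hBnn : 0 ≤ B := tsum_nonneg fun i => sq_nonneg _
  -- absolute summability for each k
  have habs : ∀ k, Summable (fun i => |v i * w i * c (k, i)|) := by
    intro k
    refine Summable.of_nonneg_of_le (fun i => abs_nonneg _)
      (fun i => ?_) (((hAk k).add (hw)).div_const 2)
    have h2 : 2 * |v i * c (k, i)| * |w i| ≤ |v i * c (k, i)| ^ 2 + |w i| ^ 2 :=
      two_mul_le_add_sq _ _
    have : |v i * w i * c (k, i)| = |v i * c (k, i)| * |w i| := by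
      rw [abs_mul, abs_mul, abs_mul]; ring
    rw [this]; linarith
  have hsum : ∀ k, Summable (fun i => v i * w i * c (k, i)) := fun k => (habs k).of_abs
  -- Cauchy-Schwarz bound per k
  have hCS : ∀ k, |∑' i, v i * w i * c (k, i)| ^ 2 ≤ A k * B := by
    intro k
    have h1 : |∑' i, v i * w i * c (k, i)| ≤ ∑' i, |v i * w i * c (k, i)| := by
      have hn : Summable fun i => ‖v i * w i * c (k, i)‖ := habs k
      have := norm_tsum_le_tsum_norm (f := fun i => v i * w i * c (k, i)) hn
      simpa only [Real.norm_eq_abs] using this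
    have h2 : ∑' i, |v i * w i * c (k, i)| ≤ Real.sqrt (A k * B) := by
      refine Summable.tsum_le_of_sum_le (habs k) (fun s => ?_)
      have hcs := Finset.sum_mul_sq_le_sq_mul_sq s (fun i => |v i * c (k, i)|)
        (fun i => |w i|)
      have heq : ∀ i, |v i * w i * c (k, i)| = |v i * c (k, i)| * |w i| := by
        intro i; rw [abs_mul, abs_mul, abs_mul]; ring
      have hle1 : ∑ i ∈ s, |v i * c (k, i)| ^ 2 ≤ A k := by
        refine Summable.sum_le_tsum s (fun i _ => sq_nonneg _) (by simpa using hAk k)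
      have hle2 : ∑ i ∈ s, |w i| ^ 2 ≤ B := by
        refine Summable.sum_le_tsum s (fun i _ => sq_nonneg _) (by simpa using hw)
      have hsq : (∑ i ∈ s, |v i * w i * c (k, i)|) ^ 2 ≤ A k * B := by
        calc (∑ i ∈ s, |v i * w i * c (k, i)|) ^ 2
            = (∑ i ∈ s, |v i * c (k, i)| * |w i|) ^ 2 := by simp_rw [heq]
          _ ≤ (∑ i ∈ s, |v i * c (k, i)| ^ 2) * ∑ i ∈ s, |w i| ^ 2 := by
              simpa [abs_mul, sq_abs] using hcs
          _ ≤ A k * B := by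
              refine mul_le_mul hle1 hle2 (Finset.sum_nonneg fun i _ => sq_nonneg _) (hAnn k)
      calc ∑ i ∈ s, |v i * w i * c (k, i)|
          = Real.sqrt ((∑ i ∈ s, |v i * w i * c (k, i)|) ^ 2) := by
            rw [Real.sqrt_sq (Finset.sum_nonneg fun i _ => abs_nonneg _)]
        _ ≤ Real.sqrt (A k * B) := Real.sqrt_le_sqrt hsq
    have h3 : |∑' i, v i * w i * c (k, i)| ≤ Real.sqrt (A k * B) := h1.trans h2
    calc |∑' i, v i * w i * c (k, i)| ^ 2
        ≤ Real.sqrt (A k * B) ^ 2 := by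
          exact pow_le_pow_left₀ (abs_nonneg _) h3 2
      _ = A k * B := Real.sq_sqrt (mul_nonneg (hAnn k) hBnn)
  -- summability of the majorant
  have hAsum : Summable A := hs.prod
  have hmaj : Summable (fun k => A k * B) := hAsum.mul_right B
  have hsum2 : Summable (fun k => |∑' i, v i * w i * c (k, i)| ^ 2) :=
    Summable.of_nonneg_of_le (fun k => sq_nonneg _) hCS hmaj
  refine ⟨hsum, hsum2, ?_⟩
  calc ∑' k, |∑' i, v i * w i * c (k, i)| ^ 2
      ≤ ∑' k, A k * B := Summable.tsum_le_tsum hCS hsum2 hmaj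
    _ = (∑' k, A k) * B := tsum_mul_right
    _ = (∑' ki : ℕ × ℕ, |v ki.2 * c ki| ^ 2) * B := by
        rw [Summable.tsum_prod hs]
end

section
/- Let p : ℕ × ℕ → ℝ be a row-stochastic kernel: p(i,k) ≥ 0 for all i, k and ∑_{k=1}^∞ p(i,k) = 1 for every i. Then sup { ∑_{k=1}^∞ p(i,k)² : i ∈ ℕ } ≤ 1; consequently, setting c_{ki} := p(i,k), for all square-summable real sequences v, w the sequence k ↦ ∑_{i=1}^∞ v_i w_i p(i,k) is square-summable with ∑_{k=1}^∞ |∑_{i=1}^∞ v_i w_i p(i,k)|² ≤ ‖v‖² ‖w‖². -/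
/-- every row-stochastic kernel `p` has columns (of the structure
constants `c_{ki} = p(i,k)`) with ℓ²-norm at most `1`, and hence defines a Markov
Hilbert evolution algebra: the product `(v·w)_k = ∑_i v_i w_i p(i,k)` is
square-summable with `‖v·w‖² ≤ ‖v‖² ‖w‖²`. -/
theorem markov_kernel_defines_HEA (p : ℕ × ℕ → ℝ)
    (hnn : ∀ i k, 0 ≤ p (i, k))
    (hrow : ∀ i, HasSum (fun k => p (i, k)) 1) :
    (∀ i, Summable (fun k => p (i, k) ^ 2) ∧ ∑' k, p (i, k) ^ 2 ≤ 1) ∧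
    ∀ v w : ℕ → ℝ, Summable (fun i => |v i| ^ 2) → Summable (fun i => |w i| ^ 2) →
      Summable (fun k => |∑' i, v i * w i * p (i, k)| ^ 2) ∧
      ∑' k, |∑' i, v i * w i * p (i, k)| ^ 2 ≤
        (∑' i, |v i| ^ 2) * ∑' i, |w i| ^ 2 := by
  have hle1 : ∀ i k, p (i, k) ≤ 1 := fun i k =>
    le_hasSum (hrow i) k (fun j _ => hnn i j)
  have hsq_le : ∀ i k, p (i, k) ^ 2 ≤ p (i, k) := fun i k => by
    nlinarith [hnn i k, hle1 i k]
  constructor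
  · intro i
    have hs : Summable (fun k => p (i, k) ^ 2) :=
      Summable.of_nonneg_of_le (fun k => sq_nonneg _) (hsq_le i) (hrow i).summable
    refine ⟨hs, ?_⟩
    calc ∑' k, p (i, k) ^ 2 ≤ ∑' k, p (i, k) :=
          Summable.tsum_le_tsum (hsq_le i) hs (hrow i).summable
      _ = 1 := (hrow i).tsum_eq
  · intro v w hv hw
    set a : ℕ → ℝ := fun i => |v i| * |w i| with ha
    have ha_nn : ∀ i, 0 ≤ a i := fun i => mul_nonneg (abs_nonneg _) (abs_nonneg _)
    have ha_sum : Summable a := by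
      apply Summable.of_nonneg_of_le ha_nn (fun i => ?_) ((hv.add hw).mul_left (1/2))
      have := sq_nonneg (|v i| - |w i|)
      simp only [ha]
      nlinarith
    set S := ∑' i, a i with hS
    have hS_nn : 0 ≤ S := tsum_nonneg ha_nn
    set B := (∑' i, |v i| ^ 2) * ∑' i, |w i| ^ 2 with hB
    have hB_nn : 0 ≤ B :=
      mul_nonneg (tsum_nonneg fun i => sq_nonneg _) (tsum_nonneg fun i => sq_nonneg _)
    -- Cauchy-Schwarz: S^2 ≤ B
    have hS_le : S ≤ Real.sqrt B := by
      apply Summable.tsum_le_of_sum_le ha_sum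
      intro s
      rw [← Real.sqrt_sq (Finset.sum_nonneg fun i _ => ha_nn i)]
      apply Real.sqrt_le_sqrt
      calc (∑ i ∈ s, a i) ^ 2 ≤ (∑ i ∈ s, |v i| ^ 2) * ∑ i ∈ s, |w i| ^ 2 :=
            Finset.sum_mul_sq_le_sq_mul_sq s _ _
        _ ≤ B := by
            apply mul_le_mul ?_ ?_ (Finset.sum_nonneg fun i _ => sq_nonneg _)
              (tsum_nonneg fun i => sq_nonneg _)
            · exact Summable.sum_le_tsum s (fun i _ => sq_nonneg _) hv
            · exact Summable.sum_le_tsum s (fun i _ => sq_nonneg _) hw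
    have hS2_le : S ^ 2 ≤ B := by
      have := pow_le_pow_left₀ hS_nn hS_le 2
      rwa [Real.sq_sqrt hB_nn] at this
    -- the double family
    set F : ℕ × ℕ → ℝ := fun q => a q.1 * p (q.1, q.2) with hF
    have hF_nn : ∀ q, (0:ℝ) ≤ F q := fun q => mul_nonneg (ha_nn _) (hnn _ _)
    have hFrow : ∀ i, Summable fun k => F (i, k) := fun i =>
      (hrow i).summable.mul_left (a i)
    have hFrow_sum : ∀ i, ∑' k, F (i, k) = a i := fun i => by
      rw [hF]; simp only
      rw [tsum_mul_left, (hrow i).tsum_eq, mul_one]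
    have hF_sum : Summable F := by
      rw [summable_prod_of_nonneg hF_nn]
      refine ⟨hFrow, ?_⟩
      simpa only [hFrow_sum] using ha_sum
    set g : ℕ → ℝ := fun k => ∑' i, F (i, k) with hg
    have hg_nn : ∀ k, 0 ≤ g k := fun k => tsum_nonneg fun i => hF_nn _
    have hg_sum : Summable g := hF_sum.prod_symm.prod
    have hg_tsum : ∑' k, g k = S := by
      rw [hg, hS]
      simp only
      rw [Summable.tsum_comm (f := fun i k => F (i, k)) hF_sum]
      exact tsum_congr hFrow_sum
    have hg_le_S : ∀ k, g k ≤ S := by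
      intro k
      calc g k ≤ ∑' i, a i := by
            apply Summable.tsum_le_tsum (fun i => ?_) (hF_sum.prod_symm.prod_factor k) ha_sum
            calc F (i, k) ≤ a i * 1 := by
                  exact mul_le_mul_of_nonneg_left (hle1 i k) (ha_nn i)
              _ = a i := mul_one _
        _ = S := rfl
    -- bound on inner sums
    have hinner_sum : ∀ k, Summable fun i => v i * w i * p (i, k) := by
      intro k
      apply Summable.of_norm
      apply Summable.of_nonneg_of_le (fun i => norm_nonneg _) (fun i => ?_)
        (hF_sum.prod_symm.prod_factor k)
      simp only [Real.norm_eq_abs, abs_mul, hF]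
      rw [abs_of_nonneg (hnn i k)]
      exact le_refl _
    have habs_le : ∀ k, |∑' i, v i * w i * p (i, k)| ≤ g k := by
      intro k
      calc |∑' i, v i * w i * p (i, k)| ≤ ∑' i, |v i * w i * p (i, k)| := by
            exact norm_tsum_le_tsum_norm (f := fun i => v i * w i * p (i, k)) (hinner_sum k).abs
        _ ≤ g k := by
            apply Summable.tsum_le_tsum (fun i => ?_) (hinner_sum k).abs
              (hF_sum.prod_symm.prod_factor k)
            rw [abs_mul, abs_mul, abs_of_nonneg (hnn i k)]
            exact le_refl _
    have hsq_le_Sg : ∀ k, |∑' i, v i * w i * p (i, k)| ^ 2 ≤ S * g k := by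
      intro k
      calc |∑' i, v i * w i * p (i, k)| ^ 2 ≤ g k ^ 2 :=
            pow_le_pow_left₀ (abs_nonneg _) (habs_le k) 2
        _ = g k * g k := sq (g k)
        _ ≤ S * g k := mul_le_mul_of_nonneg_right (hg_le_S k) (hg_nn k)
    have hsum : Summable fun k => |∑' i, v i * w i * p (i, k)| ^ 2 :=
      Summable.of_nonneg_of_le (fun k => sq_nonneg _) hsq_le_Sg (hg_sum.mul_left S)
    refine ⟨hsum, ?_⟩
    calc ∑' k, |∑' i, v i * w i * p (i, k)| ^ 2 ≤ ∑' k, S * g k :=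
          Summable.tsum_le_tsum hsq_le_Sg hsum (hg_sum.mul_left S)
      _ = S * ∑' k, g k := by rw [tsum_mul_left]
      _ = S ^ 2 := by rw [hg_tsum, sq]
      _ ≤ B := hS2_le
end

section
/- Let p : ℕ × ℕ → ℝ be a row-stochastic kernel (p(i,k) ≥ 0, ∑_{k=1}^∞ p(i,k) = 1 for all i), and suppose there exist α_k, β_i > 0 and M₁, M₂ > 0 with ∑_{k=1}^∞ p(i,k) α_k ≤ M₁ β_i for all i and ∑_{i=1}^∞ p(i,k) β_i ≤ M₂ α_k for all k. Define the n-step transition probabilities recursively by p^{(1)} := p and p^{(n+1)}(i,j) := ∑_{k=1}^∞ p^{(n)}(i,k) p(k,j). Then the evolution operator C : ℓ² → ℓ² given by (C v)_k = ∑_{i=1}^∞ p(i,k) v_i is a well-defined bounded linear operator with ‖C‖ ≤ (M₁M₂)^{1/2}, and for every i ∈ ℕ and n ≥ 1, the n-th iterate satisfies C^n(e_i) = ∑_{k=1}^∞ p^{(n)}(i,k) e_k, i.e. (C^n e_i)_k = p^{(n)}(i,k) for all k, where e_i denotes the i-th standard unit sequence. -/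
open ENNReal MeasureTheory


lemma tsum_cauchy_schwarz (f g : ℕ → ℝ≥0∞) :
    (∑' i, f i * g i) ^ 2 ≤ (∑' i, f i ^ 2) * (∑' i, g i ^ 2) := by
  have hpq : Real.HolderConjugate 2 2 := ⟨by norm_num, by norm_num, by norm_num⟩
  have h := ENNReal.lintegral_mul_le_Lp_mul_Lq (Measure.count : Measure ℕ) hpq
    (f := f) (g := g) (measurable_of_countable f).aemeasurable
    (measurable_of_countable g).aemeasurable
  simp only [lintegral_count] at h
  have e1 : ∀ h : ℕ → ℝ≥0∞, (∑' i, h i ^ (2:ℝ)) = ∑' i, h i ^ 2 := by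
    intro h; apply tsum_congr; intro i; rw [← ENNReal.rpow_natCast]; norm_num
  calc (∑' i, f i * g i) ^ 2
      ≤ ((∑' i, f i ^ (2:ℝ)) ^ (1/(2:ℝ)) * (∑' i, g i ^ (2:ℝ)) ^ (1/(2:ℝ))) ^ 2 :=
        pow_le_pow_left' h 2
    _ = (∑' i, f i ^ 2) * (∑' i, g i ^ 2) := by
        rw [mul_pow, ← ENNReal.rpow_natCast (_ ^ (1/(2:ℝ))) 2,
          ← ENNReal.rpow_natCast (_ ^ (1/(2:ℝ))) 2, ← ENNReal.rpow_mul, ← ENNReal.rpow_mul,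
          e1 f, e1 g]
        norm_num

lemma rpow_half_sq (x : ℝ≥0∞) : (x ^ (1/2:ℝ)) ^ 2 = x := by
  rw [← ENNReal.rpow_natCast (x ^ (1/2:ℝ)) 2, ← ENNReal.rpow_mul]; norm_num


lemma sq_rpow_half (x : ℝ≥0∞) : (x ^ 2) ^ (1/2:ℝ) = x := by
  rw [← ENNReal.rpow_natCast x 2, ← ENNReal.rpow_mul]; norm_num

lemma schur_bound (P : ℕ → ℕ → ℝ≥0∞) (A B : ℕ → ℝ≥0∞)
    (hP : ∀ i k, P i k ≠ ∞)
    (hB0 : ∀ i, B i ≠ 0) (hBt : ∀ i, B i ≠ ∞)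
    (N₁ N₂ : ℝ≥0∞)
    (h1 : ∀ i, ∑' k, P i k * A k ≤ N₁ * B i)
    (h2 : ∀ k, ∑' i, P i k * B i ≤ N₂ * A k)
    (V : ℕ → ℝ≥0∞) (hV : ∀ i, V i ≠ ∞) :
    ∑' k, (∑' i, P i k * V i) ^ 2 ≤ N₁ * N₂ * ∑' i, V i ^ 2 := by
  have key : ∀ k, (∑' i, P i k * V i) ^ 2
      ≤ (∑' i, P i k * B i) * (∑' i, P i k * V i ^ 2 / B i) := by
    intro k
    have hfg : ∀ i, P i k * V i
        = (P i k * B i) ^ (1/2:ℝ) * (P i k * V i ^ 2 / B i) ^ (1/2:ℝ) := by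
      intro i
      rw [← ENNReal.mul_rpow_of_ne_top (ENNReal.mul_ne_top (hP i k) (hBt i))
        ((ENNReal.div_lt_top (ENNReal.mul_ne_top (hP i k)
          (ENNReal.pow_ne_top (hV i))) (hB0 i)).ne)]
      have : P i k * B i * (P i k * V i ^ 2 / B i) = (P i k * V i) ^ 2 * (B i * (B i)⁻¹) := by
        rw [div_eq_mul_inv]; ring
      rw [this, ENNReal.mul_inv_cancel (hB0 i) (hBt i), mul_one, sq_rpow_half]
    calc (∑' i, P i k * V i) ^ 2
        = (∑' i, (P i k * B i) ^ (1/2:ℝ) * (P i k * V i ^ 2 / B i) ^ (1/2:ℝ)) ^ 2 := by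
          rw [tsum_congr hfg]
      _ ≤ (∑' i, ((P i k * B i) ^ (1/2:ℝ)) ^ 2) * (∑' i, ((P i k * V i ^ 2 / B i) ^ (1/2:ℝ)) ^ 2) :=
          tsum_cauchy_schwarz _ _
      _ = (∑' i, P i k * B i) * (∑' i, P i k * V i ^ 2 / B i) := by
          rw [tsum_congr (fun i => rpow_half_sq (P i k * B i)),
            tsum_congr (fun i => rpow_half_sq (P i k * V i ^ 2 / B i))]
  calc ∑' k, (∑' i, P i k * V i) ^ 2
      ≤ ∑' k, (N₂ * A k) * (∑' i, P i k * V i ^ 2 / B i) :=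
        ENNReal.tsum_le_tsum fun k => le_trans (key k) (mul_le_mul_left (h2 k) _)
    _ = N₂ * ∑' k, ∑' i, (V i ^ 2 / B i) * (P i k * A k) := by
        rw [← ENNReal.tsum_mul_left]
        refine tsum_congr fun k => ?_
        rw [mul_assoc, ← ENNReal.tsum_mul_left]
        congr 1
        refine tsum_congr fun i => ?_
        rw [div_eq_mul_inv, div_eq_mul_inv]; ring
    _ = N₂ * ∑' i, (V i ^ 2 / B i) * ∑' k, P i k * A k := by
        rw [ENNReal.tsum_comm]
        congr 1
        exact tsum_congr fun i => ENNReal.tsum_mul_left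
    _ ≤ N₂ * ∑' i, (V i ^ 2 / B i) * (N₁ * B i) :=
        mul_le_mul_right (ENNReal.tsum_le_tsum fun i => mul_le_mul_right (h1 i) _) _
    _ = N₁ * N₂ * ∑' i, V i ^ 2 := by
        have h : ∀ i, (V i ^ 2 / B i) * (N₁ * B i) = N₁ * V i ^ 2 := fun i => by
          rw [show V i ^ 2 / B i * (N₁ * B i) = N₁ * (V i ^ 2 / B i * B i) by ring,
            ENNReal.div_mul_cancel (hB0 i) (hBt i)]
        rw [tsum_congr h, ENNReal.tsum_mul_left, ← mul_assoc, mul_comm N₂ N₁]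

/-- The `n`-step transition kernel: `nStep p 0 = p` represents `p⁽¹⁾`, and
`nStep p n` represents `p⁽ⁿ⁺¹⁾`, via the Chapman–Kolmogorov recursion
`p⁽ⁿ⁺¹⁾(i,j) = ∑_k p⁽ⁿ⁾(i,k) p(k,j)`. -/
noncomputable def nStep (p : ℕ × ℕ → ℝ) : ℕ → ℕ × ℕ → ℝ
  | 0 => p
  | n + 1 => fun ij => ∑' k, nStep p n (ij.1, k) * p (k, ij.2)

/-- for a row-stochastic kernel satisfying the Schur-test conditions,
the evolution operator `(C v)_k = ∑_i p(i,k) v_i` is a bounded operator on ℓ² with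
`‖C‖ ≤ √(M₁M₂)`, and its `n`-th iterate applied to the basis vector `e_i` has
coordinates given by the `n`-step transition probabilities:
`(Cⁿ e_i)_k = p⁽ⁿ⁾(i,k)` for `n ≥ 1`. -/
theorem markov_evolution_operator_iterates (p : ℕ × ℕ → ℝ) (α β : ℕ → ℝ) (M₁ M₂ : ℝ)
    (hnn : ∀ i k, 0 ≤ p (i, k))
    (hrow : ∀ i, HasSum (fun k => p (i, k)) 1)
    (hα : ∀ k, 0 < α k) (hβ : ∀ i, 0 < β i) (hM₁ : 0 < M₁) (hM₂ : 0 < M₂)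
    (h1 : ∀ i, Summable (fun k => p (i, k) * α k) ∧
      ∑' k, p (i, k) * α k ≤ M₁ * β i)
    (h2 : ∀ k, Summable (fun i => p (i, k) * β i) ∧
      ∑' i, p (i, k) * β i ≤ M₂ * α k) :
    ∃ C : lp (fun _ : ℕ => ℝ) 2 →L[ℝ] lp (fun _ : ℕ => ℝ) 2,
      (∀ (v : lp (fun _ : ℕ => ℝ) 2) (k : ℕ), C v k = ∑' i, p (i, k) * v i) ∧
      ‖C‖ ≤ Real.sqrt (M₁ * M₂) ∧
      ∀ (i n k : ℕ), ((C ^ (n + 1)) (lp.single 2 i 1)) k = nStep p n (i, k) := by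
  classical
  have h2R : ((2 : ℝ≥0∞)).toReal = 2 := by norm_num
  have hrpow : ∀ x : ℝ, 0 ≤ x → x ^ ((2 : ℝ≥0∞)).toReal = x ^ 2 := by
    intro x hx
    rw [h2R, show (2:ℝ) = ((2:ℕ):ℝ) by norm_num, Real.rpow_natCast]
  set P : ℕ → ℕ → ℝ≥0∞ := fun i k => ENNReal.ofReal (p (i, k)) with hPdef
  have hPt : ∀ i k, P i k ≠ ∞ := fun i k => ENNReal.ofReal_ne_top
  set A : ℕ → ℝ≥0∞ := fun k => ENNReal.ofReal (α k) with hAdef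
  set B : ℕ → ℝ≥0∞ := fun i => ENNReal.ofReal (β i) with hBdef
  have hB0 : ∀ i, B i ≠ 0 := fun i => by
    simp only [hBdef, ne_eq, ENNReal.ofReal_eq_zero, not_le]; exact hβ i
  have hBt : ∀ i, B i ≠ ∞ := fun i => ENNReal.ofReal_ne_top
  have h1E : ∀ i, ∑' k, P i k * A k ≤ ENNReal.ofReal M₁ * B i := by
    intro i
    have e : ∑' k, P i k * A k = ENNReal.ofReal (∑' k, p (i, k) * α k) := by
      rw [ENNReal.ofReal_tsum_of_nonneg (fun k => mul_nonneg (hnn i k) (hα k).le) (h1 i).1]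
      exact tsum_congr fun k => (ENNReal.ofReal_mul (hnn i k)).symm
    rw [e, hBdef, ← ENNReal.ofReal_mul hM₁.le]
    exact ENNReal.ofReal_le_ofReal (h1 i).2
  have h2E : ∀ k, ∑' i, P i k * B i ≤ ENNReal.ofReal M₂ * A k := by
    intro k
    have e : ∑' i, P i k * B i = ENNReal.ofReal (∑' i, p (i, k) * β i) := by
      rw [ENNReal.ofReal_tsum_of_nonneg (fun i => mul_nonneg (hnn i k) (hβ i).le) (h2 k).1]
      exact tsum_congr fun i => (ENNReal.ofReal_mul (hnn i k)).symm
    rw [e, hAdef, ← ENNReal.ofReal_mul hM₂.le]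
    exact ENNReal.ofReal_le_ofReal (h2 k).2
  -- facts about an arbitrary v ∈ ℓ²
  have hv2 : ∀ v : lp (fun _ : ℕ => ℝ) 2, Summable (fun i => ‖v i‖ ^ 2) := by
    intro v
    have h := (lp.memℓp v).summable (by rw [h2R]; norm_num)
    refine h.congr fun i => hrpow _ (norm_nonneg _)
  have hVsum : ∀ v : lp (fun _ : ℕ => ℝ) 2,
      ∑' i, (ENNReal.ofReal ‖v i‖) ^ 2 = ENNReal.ofReal (∑' i, ‖v i‖ ^ 2) := by
    intro v
    rw [ENNReal.ofReal_tsum_of_nonneg (fun i => sq_nonneg _) (hv2 v)]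
    exact tsum_congr fun i => (ENNReal.ofReal_pow (norm_nonneg _) 2).symm
  have Est : ∀ v : lp (fun _ : ℕ => ℝ) 2,
      ∑' k, (∑' i, P i k * ENNReal.ofReal ‖v i‖) ^ 2
        ≤ ENNReal.ofReal (M₁ * M₂ * ∑' i, ‖v i‖ ^ 2) := by
    intro v
    have h := schur_bound P A B hPt hB0 hBt (ENNReal.ofReal M₁) (ENNReal.ofReal M₂)
      h1E h2E (fun i => ENNReal.ofReal ‖v i‖) (fun i => ENNReal.ofReal_ne_top)
    refine h.trans_eq ?_
    rw [hVsum v, ← ENNReal.ofReal_mul hM₁.le,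
      ← ENNReal.ofReal_mul (mul_nonneg hM₁.le hM₂.le)]
  have hTne : ∀ (v : lp (fun _ : ℕ => ℝ) 2) k,
      (∑' i, P i k * ENNReal.ofReal ‖v i‖) ≠ ∞ := by
    intro v k
    intro htop
    have h := (ENNReal.le_tsum k).trans (Est v)
    rw [htop, show ((⊤:ℝ≥0∞) ^ 2) = ⊤ by simp] at h
    exact absurd h (by simp)
  have hsum : ∀ (v : lp (fun _ : ℕ => ℝ) 2) k, Summable (fun i => p (i, k) * v i) := by
    intro v k
    have h := ENNReal.summable_toReal (hTne v k)
    refine Summable.of_norm (h.congr fun i => ?_)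
    rw [← ENNReal.ofReal_mul (hnn i k), ENNReal.toReal_ofReal
      (mul_nonneg (hnn i k) (norm_nonneg _)), norm_mul, Real.norm_of_nonneg (hnn i k)]
  have habs : ∀ (v : lp (fun _ : ℕ => ℝ) 2) k,
      ENNReal.ofReal (∑' i, ‖p (i, k) * v i‖) = ∑' i, P i k * ENNReal.ofReal ‖v i‖ := by
    intro v k
    rw [ENNReal.ofReal_tsum_of_nonneg (fun i => norm_nonneg _) ((hsum v k).norm)]
    refine tsum_congr fun i => ?_
    rw [norm_mul, Real.norm_of_nonneg (hnn i k), ENNReal.ofReal_mul (hnn i k)]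
  have hbound : ∀ (v : lp (fun _ : ℕ => ℝ) 2) k,
      ‖∑' i, p (i, k) * v i‖ ≤ (∑' i, P i k * ENNReal.ofReal ‖v i‖).toReal := by
    intro v k
    refine (norm_tsum_le_tsum_norm (hsum v k).norm).trans ?_
    rw [← habs v k, ENNReal.toReal_ofReal (tsum_nonneg fun i => norm_nonneg _)]
  have hsqsum : ∀ v : lp (fun _ : ℕ => ℝ) 2,
      Summable (fun k => ((∑' i, P i k * ENNReal.ofReal ‖v i‖).toReal) ^ 2) := by
    intro v
    have h := ENNReal.summable_toReal (f := fun k => (∑' i, P i k * ENNReal.ofReal ‖v i‖) ^ 2)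
      (by
        intro htop
        exact absurd (htop ▸ Est v) (by simp))
    refine h.congr fun k => ?_
    rw [ENNReal.toReal_pow]
  have hCsq : ∀ v : lp (fun _ : ℕ => ℝ) 2,
      Summable (fun k => ‖∑' i, p (i, k) * v i‖ ^ 2) ∧
      ∑' k, ‖∑' i, p (i, k) * v i‖ ^ 2 ≤ M₁ * M₂ * ∑' i, ‖v i‖ ^ 2 := by
    intro v
    have hle : ∀ k, ‖∑' i, p (i, k) * v i‖ ^ 2
        ≤ ((∑' i, P i k * ENNReal.ofReal ‖v i‖).toReal) ^ 2 := fun k =>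
      pow_le_pow_left₀ (norm_nonneg _) (hbound v k) 2
    have hs : Summable (fun k => ‖∑' i, p (i, k) * v i‖ ^ 2) :=
      Summable.of_nonneg_of_le (fun k => sq_nonneg _) hle (hsqsum v)
    refine ⟨hs, ?_⟩
    have step1 : ∑' k, ‖∑' i, p (i, k) * v i‖ ^ 2
        ≤ ∑' k, ((∑' i, P i k * ENNReal.ofReal ‖v i‖).toReal) ^ 2 :=
      Summable.tsum_le_tsum hle hs (hsqsum v)
    have step2 : ∑' k, ((∑' i, P i k * ENNReal.ofReal ‖v i‖).toReal) ^ 2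
        = (∑' k, (∑' i, P i k * ENNReal.ofReal ‖v i‖) ^ 2).toReal := by
      rw [ENNReal.tsum_toReal_eq (fun k => ENNReal.pow_ne_top (hTne v k))]
      exact tsum_congr fun k => (ENNReal.toReal_pow _ _).symm
    have step3 : (∑' k, (∑' i, P i k * ENNReal.ofReal ‖v i‖) ^ 2).toReal
        ≤ M₁ * M₂ * ∑' i, ‖v i‖ ^ 2 := by
      have := ENNReal.toReal_mono ENNReal.ofReal_ne_top (Est v)
      rwa [ENNReal.toReal_ofReal (mul_nonneg (mul_nonneg hM₁.le hM₂.le)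
        (tsum_nonneg fun i => sq_nonneg _))] at this
    calc ∑' k, ‖∑' i, p (i, k) * v i‖ ^ 2 ≤ _ := step1
      _ = _ := step2
      _ ≤ _ := step3
  have hmem : ∀ v : lp (fun _ : ℕ => ℝ) 2, Memℓp (fun k => ∑' i, p (i, k) * v i) 2 := by
    intro v
    apply memℓp_gen
    exact ((hCsq v).1).congr fun k => (hrpow _ (norm_nonneg _)).symm
  set F : lp (fun _ : ℕ => ℝ) 2 →ₗ[ℝ] lp (fun _ : ℕ => ℝ) 2 :=
    { toFun := fun v => ⟨fun k => ∑' i, p (i, k) * v i, hmem v⟩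
      map_add' := by
        intro v w
        apply lp.ext
        funext k
        simp only [lp.coeFn_add, Pi.add_apply]
        have : ∀ i, p (i, k) * (v + w) i = p (i, k) * v i + p (i, k) * w i := by
          intro i
          rw [lp.coeFn_add, Pi.add_apply, mul_add]
        calc (∑' i, p (i, k) * (v + w) i)
            = ∑' i, (p (i, k) * v i + p (i, k) * w i) := tsum_congr this
          _ = (∑' i, p (i, k) * v i) + ∑' i, p (i, k) * w i :=
              Summable.tsum_add (hsum v k) (hsum w k)
      map_smul' := by
        intro c v
        apply lp.ext
        funext k
        simp only [lp.coeFn_smul, Pi.smul_apply, RingHom.id_apply, smul_eq_mul]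
        have : ∀ i, p (i, k) * (c • v) i = c * (p (i, k) * v i) := by
          intro i
          rw [lp.coeFn_smul, Pi.smul_apply, smul_eq_mul]
          ring
        calc (∑' i, p (i, k) * (c • v) i)
            = ∑' i, c * (p (i, k) * v i) := tsum_congr this
          _ = c * ∑' i, p (i, k) * v i := (hsum v k).tsum_mul_left c } with hFdef
  have hFapply : ∀ (v : lp (fun _ : ℕ => ℝ) 2) (k : ℕ),
      F v k = ∑' i, p (i, k) * v i := fun v k => rfl
  have hFnorm : ∀ v : lp (fun _ : ℕ => ℝ) 2,
      ‖F v‖ ≤ Real.sqrt (M₁ * M₂) * ‖v‖ := by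
    intro v
    refine lp.norm_le_of_tsum_le (by rw [h2R]; norm_num)
      (mul_nonneg (Real.sqrt_nonneg _) (norm_nonneg _)) ?_
    have hnv : ∑' i, ‖v i‖ ^ 2 = ‖v‖ ^ 2 := by
      rw [← hrpow _ (norm_nonneg v), lp.norm_rpow_eq_tsum (by rw [h2R]; norm_num) v]
      exact tsum_congr fun i => (hrpow _ (norm_nonneg _)).symm
    have key := (hCsq v).2
    rw [hnv] at key
    have e2 : (Real.sqrt (M₁ * M₂) * ‖v‖) ^ ((2:ℝ≥0∞)).toReal
        = M₁ * M₂ * ‖v‖ ^ 2 := by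
      rw [hrpow _ (mul_nonneg (Real.sqrt_nonneg _) (norm_nonneg _)), mul_pow,
        Real.sq_sqrt (mul_nonneg hM₁.le hM₂.le)]
    rw [e2]
    refine le_trans (le_of_eq ?_) key
    exact tsum_congr fun k => hrpow _ (norm_nonneg _)

  set C : lp (fun _ : ℕ => ℝ) 2 →L[ℝ] lp (fun _ : ℕ => ℝ) 2 :=
    F.mkContinuous (Real.sqrt (M₁ * M₂)) hFnorm with hCdef
  have hCapply : ∀ (v : lp (fun _ : ℕ => ℝ) 2) (k : ℕ),
      C v k = ∑' i, p (i, k) * v i := fun v k => rfl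
  refine ⟨C, hCapply, F.mkContinuous_norm_le (Real.sqrt_nonneg _) hFnorm, ?_⟩
  intro i n
  induction n with
  | zero =>
    intro k
    rw [pow_one, hCapply]
    rw [tsum_eq_single i (fun m hm => by
      rw [lp.single_apply_ne 2 i _ hm, mul_zero]), lp.single_apply_self, mul_one]
    rfl
  | succ n ih =>
    intro k
    have hstep : (C ^ (n + 2)) (lp.single 2 i 1) = C ((C ^ (n + 1)) (lp.single 2 i 1)) := by
      rw [pow_succ']
      rfl
    rw [hstep, hCapply]
    have : ∀ m, p (m, k) * ((C ^ (n + 1)) (lp.single 2 i 1)) m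
        = nStep p n (i, m) * p (m, k) := by
      intro m
      rw [ih m, mul_comm]
    rw [tsum_congr this]
    rfl
end

section
/- Let p : ℕ × ℕ → ℝ be a row-stochastic kernel (p(i,k) ≥ 0, ∑_{k=1}^∞ p(i,k) = 1 for all i) and suppose there is M > 0 such that for every k the family (p(i,k))_i is summable with ∑_{i=1}^∞ p(i,k) ≤ M. Then the evolution operator C : ℓ² → ℓ², (C v)_k = ∑_{i=1}^∞ p(i,k) v_i, is a well-defined bounded linear operator with ‖C‖ ≤ M^{1/2}. -/
open scoped ENNReal

private lemma rpow_toReal_two (x : ℝ) : x ^ (2 : ℝ≥0∞).toReal = x ^ 2 := by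
  rw [ENNReal.toReal_ofNat, show (2:ℝ) = ((2:ℕ):ℝ) by norm_num, Real.rpow_natCast]

private lemma summable_mul_of_sq {a b : ℕ → ℝ} (ha : ∀ i, 0 ≤ a i) (hb : ∀ i, 0 ≤ b i)
    (ha2 : Summable fun i => a i ^ 2) (hb2 : Summable fun i => b i ^ 2) :
    Summable fun i => a i * b i := by
  refine Summable.of_nonneg_of_le (fun i => mul_nonneg (ha i) (hb i))
    (fun i => ?_) ((ha2.add hb2).div_const 2)
  have := two_mul_le_add_sq (a i) (b i)
  nlinarith

private lemma tsum_mul_le_sqrt_mul_sqrt {a b : ℕ → ℝ} (ha : ∀ i, 0 ≤ a i) (hb : ∀ i, 0 ≤ b i)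
    (ha2 : Summable fun i => a i ^ 2) (hb2 : Summable fun i => b i ^ 2) :
    ∑' i, a i * b i ≤ Real.sqrt (∑' i, a i ^ 2) * Real.sqrt (∑' i, b i ^ 2) := by
  refine Summable.tsum_le_of_sum_le (summable_mul_of_sq ha hb ha2 hb2) fun s => ?_
  refine (Real.sum_mul_le_sqrt_mul_sqrt s a b).trans ?_
  refine mul_le_mul (Real.sqrt_le_sqrt (Summable.sum_le_tsum s (fun i _ => sq_nonneg _) ha2))
    (Real.sqrt_le_sqrt (Summable.sum_le_tsum s (fun i _ => sq_nonneg _) hb2))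
    (Real.sqrt_nonneg _) (Real.sqrt_nonneg _)

section Aux

variable (p : ℕ × ℕ → ℝ) (M : ℝ)
    (hM : 0 < M)
    (hnn : ∀ i k, 0 ≤ p (i, k))
    (hrow : ∀ i, HasSum (fun k => p (i, k)) 1)
    (hcol : ∀ k, Summable (fun i => p (i, k)) ∧ ∑' i, p (i, k) ≤ M)
    (u : ℕ → ℝ) (hu2 : Summable fun i => u i ^ 2)

include hnn hrow hu2 in
private lemma aux_pv2 (k : ℕ) : Summable fun i => p (i, k) * u i ^ 2 := by
  refine Summable.of_nonneg_of_le (fun i => mul_nonneg (hnn i k) (sq_nonneg _))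
    (fun i => ?_) hu2
  have h1 : p (i, k) ≤ 1 := le_hasSum (hrow i) k fun j _ => hnn i j
  nlinarith [hnn i k, sq_nonneg (u i)]

include hnn hrow hcol hu2 in
private lemma aux_sum (k : ℕ) : Summable fun i => p (i, k) * u i := by
  refine Summable.of_norm ?_
  have e : ∀ i, ‖p (i, k) * u i‖ = Real.sqrt (p (i, k)) * (Real.sqrt (p (i, k)) * |u i|) := by
    intro i
    rw [← mul_assoc, Real.mul_self_sqrt (hnn i k), norm_mul, Real.norm_eq_abs,
      Real.norm_eq_abs, abs_of_nonneg (hnn i k)]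
  simp only [e]
  refine summable_mul_of_sq (fun i => Real.sqrt_nonneg _)
    (fun i => mul_nonneg (Real.sqrt_nonneg _) (abs_nonneg _)) ?_ ?_
  · simpa [Real.sq_sqrt (hnn _ k)] using (hcol k).1
  · have e2 : ∀ i, (Real.sqrt (p (i, k)) * |u i|) ^ 2 = p (i, k) * u i ^ 2 := by
      intro i; rw [mul_pow, Real.sq_sqrt (hnn i k), sq_abs]
    simpa [e2] using aux_pv2 p hnn hrow u hu2 k

include hnn hrow hu2 in
private lemma aux_F : Summable (Function.uncurry fun i k => p (i, k) * u i ^ 2) := by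
  refine (summable_prod_of_nonneg fun x => mul_nonneg (hnn x.1 x.2) (sq_nonneg _)).2
    ⟨fun i => Summable.mul_right (u i ^ 2) (hrow i).summable, ?_⟩
  have e : ∀ i, ∑' k, p (i, k) * u i ^ 2 = u i ^ 2 := by
    intro i
    rw [tsum_mul_right, (hrow i).tsum_eq, one_mul]
  simpa [Function.uncurry, e] using hu2

include hnn hrow hu2 in
private lemma aux_colsum : Summable fun k => ∑' i, p (i, k) * u i ^ 2 := by
  have hs := (aux_F p hnn hrow u hu2).prod_symm
  have := (summable_prod_of_nonneg
    (f := fun x : ℕ × ℕ => p (x.2, x.1) * u x.2 ^ 2)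
    (fun x => mul_nonneg (hnn x.2 x.1) (sq_nonneg _))).1 ?_
  · exact this.2
  · exact hs.congr fun x => rfl

include hnn hrow hu2 in
private lemma aux_fub : ∑' k, ∑' i, p (i, k) * u i ^ 2 = ∑' i, u i ^ 2 := by
  rw [Summable.tsum_comm' (aux_F p hnn hrow u hu2)
    (fun i => Summable.mul_right (u i ^ 2) (hrow i).summable)
    (fun k => aux_pv2 p hnn hrow u hu2 k)]
  congr 1
  ext i
  rw [tsum_mul_right, (hrow i).tsum_eq, one_mul]

include hM hnn hrow hcol hu2 in
private lemma aux_point (k : ℕ) :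
    (∑' i, p (i, k) * u i) ^ 2 ≤ M * ∑' i, p (i, k) * u i ^ 2 := by
  have habs : |∑' i, p (i, k) * u i| ≤ ∑' i, p (i, k) * |u i| := by
    have h1 := norm_tsum_le_tsum_norm (f := fun i => p (i, k) * u i)
      (by simpa only [Real.norm_eq_abs] using (aux_sum p M hnn hrow hcol u hu2 k).abs)
    have e : ∀ i, ‖p (i, k) * u i‖ = p (i, k) * |u i| := by
      intro i; rw [norm_mul, Real.norm_eq_abs, Real.norm_eq_abs, abs_of_nonneg (hnn i k)]
    simpa [Real.norm_eq_abs, e] using h1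
  have hCS : ∑' i, p (i, k) * |u i| ≤
      Real.sqrt M * Real.sqrt (∑' i, p (i, k) * u i ^ 2) := by
    have key : ∀ i, p (i, k) * |u i| =
        Real.sqrt (p (i, k)) * (Real.sqrt (p (i, k)) * |u i|) := by
      intro i; rw [← mul_assoc, Real.mul_self_sqrt (hnn i k)]
    have e2 : ∀ i, (Real.sqrt (p (i, k)) * |u i|) ^ 2 = p (i, k) * u i ^ 2 := by
      intro i; rw [mul_pow, Real.sq_sqrt (hnn i k), sq_abs]
    have h1 : Summable fun i => Real.sqrt (p (i, k)) ^ 2 := by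
      simpa [Real.sq_sqrt (hnn _ k)] using (hcol k).1
    have h2 : Summable fun i => (Real.sqrt (p (i, k)) * |u i|) ^ 2 := by
      simpa [e2] using aux_pv2 p hnn hrow u hu2 k
    calc ∑' i, p (i, k) * |u i|
        = ∑' i, Real.sqrt (p (i, k)) * (Real.sqrt (p (i, k)) * |u i|) := by
          exact tsum_congr key
      _ ≤ Real.sqrt (∑' i, Real.sqrt (p (i, k)) ^ 2) *
          Real.sqrt (∑' i, (Real.sqrt (p (i, k)) * |u i|) ^ 2) :=
          tsum_mul_le_sqrt_mul_sqrt (fun i => Real.sqrt_nonneg _)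
            (fun i => mul_nonneg (Real.sqrt_nonneg _) (abs_nonneg _)) h1 h2
      _ ≤ Real.sqrt M * Real.sqrt (∑' i, p (i, k) * u i ^ 2) := by
          refine mul_le_mul ?_ ?_ (Real.sqrt_nonneg _) (Real.sqrt_nonneg _)
          · refine Real.sqrt_le_sqrt ?_
            calc ∑' i, Real.sqrt (p (i, k)) ^ 2 = ∑' i, p (i, k) :=
                  tsum_congr fun i => Real.sq_sqrt (hnn i k)
              _ ≤ M := (hcol k).2
          · exact le_of_eq (congrArg Real.sqrt (tsum_congr e2))
  calc (∑' i, p (i, k) * u i) ^ 2 = |∑' i, p (i, k) * u i| ^ 2 := (sq_abs _).symm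
    _ ≤ (Real.sqrt M * Real.sqrt (∑' i, p (i, k) * u i ^ 2)) ^ 2 :=
        pow_le_pow_left₀ (abs_nonneg _) (habs.trans hCS) 2
    _ = M * ∑' i, p (i, k) * u i ^ 2 := by
        rw [mul_pow, Real.sq_sqrt hM.le, Real.sq_sqrt (tsum_nonneg fun i =>
          mul_nonneg (hnn i k) (sq_nonneg _))]

include hM hnn hrow hcol hu2 in
private lemma aux_sq_summable : Summable fun k => (∑' i, p (i, k) * u i) ^ 2 :=
  Summable.of_nonneg_of_le (fun k => sq_nonneg _)
    (fun k => aux_point p M hM hnn hrow hcol u hu2 k)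
    ((aux_colsum p hnn hrow u hu2).mul_left M)

include hM hnn hrow hcol hu2 in
private lemma aux_tsum_bound :
    ∑' k, (∑' i, p (i, k) * u i) ^ 2 ≤ M * ∑' i, u i ^ 2 := by
  calc ∑' k, (∑' i, p (i, k) * u i) ^ 2
      ≤ ∑' k, M * ∑' i, p (i, k) * u i ^ 2 :=
        Summable.tsum_le_tsum (fun k => aux_point p M hM hnn hrow hcol u hu2 k)
          (aux_sq_summable p M hM hnn hrow hcol u hu2)
          ((aux_colsum p hnn hrow u hu2).mul_left M)
    _ = M * ∑' k, ∑' i, p (i, k) * u i ^ 2 := tsum_mul_left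
    _ = M * ∑' i, u i ^ 2 := by rw [aux_fub p hnn hrow u hu2]

end Aux

/-- for a row-stochastic kernel whose column sums are uniformly
bounded by `M`, the evolution operator `(C v)_k = ∑_i p(i,k) v_i` is a
well-defined bounded linear operator on ℓ² with `‖C‖ ≤ √M`. -/
theorem evolution_operator_bounded_of_column_sums (p : ℕ × ℕ → ℝ) (M : ℝ)
    (hM : 0 < M)
    (hnn : ∀ i k, 0 ≤ p (i, k))
    (hrow : ∀ i, HasSum (fun k => p (i, k)) 1)
    (hcol : ∀ k, Summable (fun i => p (i, k)) ∧ ∑' i, p (i, k) ≤ M) :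
    ∃ C : lp (fun _ : ℕ => ℝ) 2 →L[ℝ] lp (fun _ : ℕ => ℝ) 2,
      (∀ (v : lp (fun _ : ℕ => ℝ) 2) (k : ℕ), C v k = ∑' i, p (i, k) * v i) ∧
      ‖C‖ ≤ Real.sqrt M := by
  have htwo : (0:ℝ) < (2 : ℝ≥0∞).toReal := by norm_num
  have hv2 : ∀ v : lp (fun _ : ℕ => ℝ) 2, Summable fun i => (v i) ^ 2 := by
    intro v
    have := (lp.memℓp v).summable htwo
    simpa [Real.rpow_natCast, sq_abs, ENNReal.toReal_ofNat] using this
  have hmem : ∀ v : lp (fun _ : ℕ => ℝ) 2,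
      Memℓp (fun k => ∑' i, p (i, k) * v i) 2 := by
    intro v
    apply memℓp_gen
    simpa [Real.rpow_natCast, sq_abs, ENNReal.toReal_ofNat] using
      aux_sq_summable p M hM hnn hrow hcol (v : ∀ _ : ℕ, ℝ) (hv2 v)
  let T : lp (fun _ : ℕ => ℝ) 2 →ₗ[ℝ] lp (fun _ : ℕ => ℝ) 2 :=
    { toFun := fun v => ⟨fun k => ∑' i, p (i, k) * v i, hmem v⟩
      map_add' := by
        intro v w
        apply Subtype.ext
        funext k
        have e : ∀ i, p (i, k) * (v + w : lp (fun _ : ℕ => ℝ) 2) i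
            = p (i, k) * v i + p (i, k) * w i := by
          intro i
          rw [lp.coeFn_add]
          simp [mul_add]
        show (∑' i, p (i, k) * (v + w : lp (fun _ : ℕ => ℝ) 2) i)
          = (∑' i, p (i, k) * v i) + ∑' i, p (i, k) * w i
        rw [tsum_congr e]
        exact Summable.tsum_add (aux_sum p M hnn hrow hcol _ (hv2 v) k)
          (aux_sum p M hnn hrow hcol _ (hv2 w) k)
      map_smul' := by
        intro c v
        apply Subtype.ext
        funext k
        have e : ∀ i, p (i, k) * (c • v : lp (fun _ : ℕ => ℝ) 2) i
            = c * (p (i, k) * v i) := by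
          intro i
          rw [lp.coeFn_smul]
          simp [smul_eq_mul]; ring
        show (∑' i, p (i, k) * (c • v : lp (fun _ : ℕ => ℝ) 2) i)
          = c * ∑' i, p (i, k) * v i
        rw [tsum_congr e]
        exact tsum_mul_left }
  have hTnorm : ∀ v, ‖T v‖ ≤ Real.sqrt M * ‖v‖ := by
    intro v
    refine lp.norm_le_of_tsum_le htwo (by positivity) ?_
    have hnorm_v : ‖v‖ ^ (2 : ℝ≥0∞).toReal = ∑' i, ‖v i‖ ^ (2 : ℝ≥0∞).toReal :=
      lp.norm_rpow_eq_tsum htwo v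
    have e1 : ∀ k : ℕ, ‖(T v : lp (fun _ : ℕ => ℝ) 2) k‖ ^ (2 : ℝ≥0∞).toReal
        = (∑' i, p (i, k) * v i) ^ 2 := by
      intro k
      show ‖∑' i, p (i, k) * v i‖ ^ (2 : ℝ≥0∞).toReal = _
      rw [rpow_toReal_two, Real.norm_eq_abs, sq_abs]
    calc ∑' k, ‖(T v : lp (fun _ : ℕ => ℝ) 2) k‖ ^ (2 : ℝ≥0∞).toReal
        = ∑' k, (∑' i, p (i, k) * v i) ^ 2 := tsum_congr e1
      _ ≤ M * ∑' i, (v i) ^ 2 := aux_tsum_bound p M hM hnn hrow hcol _ (hv2 v)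
      _ = (Real.sqrt M * ‖v‖) ^ (2 : ℝ≥0∞).toReal := by
          rw [rpow_toReal_two, mul_pow, Real.sq_sqrt hM.le]
          congr 1
          rw [← rpow_toReal_two ‖v‖, hnorm_v]
          refine tsum_congr fun i => ?_
          rw [rpow_toReal_two, Real.norm_eq_abs, sq_abs]
  refine ⟨T.mkContinuous (Real.sqrt M) hTnorm, fun v k => rfl, ?_⟩
  exact T.mkContinuous_norm_le (Real.sqrt_nonneg M) hTnorm
end

section
/- Fix p ∈ (0,1) and define the house-of-cards transition kernel on (ℕ ∪ {0})² with constant parameter: q(i,0) = p and q(i, i+1) = 1 − p for every i ≥ 0, and q(i,k) = 0 otherwise. Then there do NOT exist positive reals α_k > 0, β_i > 0 (i, k ∈ ℕ ∪ {0}) and constants M₁, M₂ > 0 such that ∑_{k=0}^∞ q(i,k) α_k ≤ M₁ β_i for all i and the family (q(i,k) β_i)_i is summable with ∑_{i=0}^∞ q(i,k) β_i ≤ M₂ α_k for all k. -/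
/-- house-of-cards with constant parameter: for the kernel
`q(i,0) = p`, `q(i,i+1) = 1 - p` (with `0 < p < 1`), `q(i,k) = 0` otherwise,
there are NO positive weights `α, β` and constants `M₁, M₂ > 0` satisfying the
Schur-test conditions. -/
theorem house_of_cards_constant_no_schur (p : ℝ) (hp : 0 < p) (hp1 : p < 1)
    (q : ℕ × ℕ → ℝ)
    (hq : ∀ i k, q (i, k) =
      if k = 0 then p else (if k = i + 1 then 1 - p else 0)) :
    ¬ ∃ (α β : ℕ → ℝ) (M₁ M₂ : ℝ), (∀ k, 0 < α k) ∧ (∀ i, 0 < β i) ∧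
      0 < M₁ ∧ 0 < M₂ ∧
      (∀ i, Summable (fun k => q (i, k) * α k) ∧
        ∑' k, q (i, k) * α k ≤ M₁ * β i) ∧
      (∀ k, Summable (fun i => q (i, k) * β i) ∧
        ∑' i, q (i, k) * β i ≤ M₂ * α k) := by
  rintro ⟨α, β, M₁, M₂, hα, hβ, hM₁, hM₂, hrow, hcol⟩
  -- column condition at k = 0 : summability of p * β i
  have hqi0 : ∀ i, q (i, 0) = p := fun i => by simp [hq i 0]
  have hsumβ : Summable β := by
    have := (hcol 0).1
    have h : (fun i => q (i, 0) * β i) = fun i => p * β i := by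
      funext i; rw [hqi0 i]
    rw [h] at this
    exact (summable_mul_left_iff (ne_of_gt hp)).mp this
  have htend : Filter.Tendsto β Filter.atTop (nhds 0) := hsumβ.tendsto_atTop_zero
  -- row condition gives lower bound on β i
  have hlow : ∀ i, p * α 0 ≤ M₁ * β i := by
    intro i
    refine le_trans ?_ (hrow i).2
    have hnn : ∀ k, 0 ≤ q (i, k) * α k := by
      intro k
      rw [hq i k]
      have h1 := (hα k).le
      have h2 : (0:ℝ) ≤ 1 - p := by linarith
      split_ifs <;> nlinarith
    have := Summable.le_tsum (hrow i).1 0 (fun k _ => hnn k)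
    simpa [hqi0 i] using this
  -- contradiction: β i ≥ (p * α 0) / M₁ > 0 but β → 0
  have hpa : 0 < (p * α 0) / M₁ := div_pos (mul_pos hp (hα 0)) hM₁
  have hev := htend.eventually (gt_mem_nhds hpa)
  obtain ⟨i, hi⟩ := hev.exists
  have := hlow i
  have hβi : β i < (p * α 0) / M₁ := hi
  have : p * α 0 < p * α 0 := by
    calc p * α 0 ≤ M₁ * β i := hlow i
    _ < M₁ * ((p * α 0) / M₁) := by
        exact mul_lt_mul_of_pos_left hβi hM₁
    _ = p * α 0 := by field_simp
  linarith
end
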